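/- arXiv:2306.06786 — 3 statements merged into one kernel-verified Lean document; each statement's English description precedes it below -/
import Mathlib

section
/- Let R = (R¹, R²): ℝⁿ × ℝⁿ → ℝⁿ × ℝⁿ be smooth (C¹) with R(x,0) = (x,x) for all x and with D_v R²(x,0) − D_v R¹(x,0) = Id for all x. Then for every x ∈ ℝⁿ the total derivative DR(x,0) is an invertible linear map on ℝ²ⁿ; in particular R is a local diffeomorphism near every point of the zero section {(x,0)}. -/
lemma discretization_aux {E : Type*} [NormedAddCommGroup E] [NormedSpace ℝ E]
    [FiniteDimensional ℝ E]
    (R : E × E → E × E) (hR : ContDiff ℝ 1 R)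
    (hR0 : ∀ x : E, R (x, 0) = (x, x))
    (hRd : ∀ x : E,
      fderiv ℝ (fun v : E => (R (x, v)).2) 0 - fderiv ℝ (fun v : E => (R (x, v)).1) 0 =
      ContinuousLinearMap.id ℝ E) (x : E) :
    (∃ L : (E × E) ≃L[ℝ] (E × E), (L : E × E →L[ℝ] E × E) = fderiv ℝ R (x, 0)) ∧
      ∃ s ∈ nhds ((x, (0 : E))), Set.InjOn R s := by
  have hstrict : HasStrictFDerivAt R (fderiv ℝ R (x, 0)) (x, 0) := hR.hasStrictFDerivAt one_ne_zero
  set D : E × E →L[ℝ] E × E := fderiv ℝ R (x, 0) with hD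
  have hder : HasFDerivAt R D (x, 0) := hstrict.hasFDerivAt
  have hinr : HasFDerivAt (fun v : E => ((x, v) : E × E))
      (ContinuousLinearMap.inr ℝ E E) 0 := HasFDerivAt.prodMk (hasFDerivAt_const x 0) (hasFDerivAt_id 0)
  have hcomp : HasFDerivAt (fun v : E => R (x, v))
      (D.comp (ContinuousLinearMap.inr ℝ E E)) 0 := by
    have := hder.comp 0 hinr
    exact this
  have h1 : fderiv ℝ (fun v : E => (R (x, v)).1) 0 =
      (ContinuousLinearMap.fst ℝ E E).comp (D.comp (ContinuousLinearMap.inr ℝ E E)) :=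
    HasFDerivAt.fderiv hcomp.fst
  have h2 : fderiv ℝ (fun v : E => (R (x, v)).2) 0 =
      (ContinuousLinearMap.snd ℝ E E).comp (D.comp (ContinuousLinearMap.inr ℝ E E)) :=
    HasFDerivAt.fderiv hcomp.snd
  have hkey : ∀ k : E, (D (0, k)).2 - (D (0, k)).1 = k := by
    intro k
    have h := hRd x
    rw [h1, h2] at h
    have := congrArg (fun T : E →L[ℝ] E => T k) h
    simpa using this
  have hxdir : ∀ h : E, D (h, 0) = (h, h) := by
    intro h
    have hinl : HasFDerivAt (fun y : E => ((y, 0) : E × E))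
        (ContinuousLinearMap.inl ℝ E E) x := HasFDerivAt.prodMk (hasFDerivAt_id x) (hasFDerivAt_const 0 x)
    have hc : HasFDerivAt (fun y : E => R (y, 0))
        (D.comp (ContinuousLinearMap.inl ℝ E E)) x := by
      have := hder.comp x hinl
      exact this
    have hc' : HasFDerivAt (fun y : E => ((y, y) : E × E))
        (D.comp (ContinuousLinearMap.inl ℝ E E)) x := by
      apply hc.congr_of_eventuallyEq
      filter_upwards with y using (hR0 y).symm
    have hc'' : HasFDerivAt (fun y : E => ((y, y) : E × E))
        ((ContinuousLinearMap.id ℝ E).prod (ContinuousLinearMap.id ℝ E)) x :=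
      HasFDerivAt.prodMk (hasFDerivAt_id x) (hasFDerivAt_id x)
    have heq := hc'.unique hc''
    have := congrArg (fun T : E →L[ℝ] E × E => T h) heq
    simpa using this
  have hinj : Function.Injective D := by
    rw [injective_iff_map_eq_zero]
    intro p hp
    obtain ⟨h, k⟩ := p
    have hsplit : D (h, k) = D (h, 0) + D (0, k) := by
      rw [← map_add]; norm_num
    rw [hsplit, hxdir h] at hp
    have h1' : h + (D (0, k)).1 = 0 := congrArg Prod.fst hp
    have h2' : h + (D (0, k)).2 = 0 := congrArg Prod.snd hp
    have h3 : (D (0, k)).2 - (D (0, k)).1 = 0 := by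
      have := congrArg₂ (· - ·) h2' h1'
      simpa using this
    have hk : k = 0 := by rw [hkey k] at h3; exact h3
    subst hk
    have h0 : D (0, (0 : E)) = 0 := by
      have : ((0 : E), (0 : E)) = (0 : E × E) := rfl
      rw [this, map_zero]
    rw [h0, add_zero] at hp
    have hh : h = 0 := congrArg Prod.fst hp
    simp [hh, Prod.ext_iff]
  have hsurj : Function.Surjective (D : E × E →ₗ[ℝ] E × E) :=
    LinearMap.injective_iff_surjective.mp hinj
  let Dlin : (E × E) ≃ₗ[ℝ] (E × E) :=
    LinearEquiv.ofBijective (D : E × E →ₗ[ℝ] E × E) ⟨hinj, hsurj⟩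
  let L : (E × E) ≃L[ℝ] (E × E) := Dlin.toContinuousLinearEquiv
  have hL : (L : E × E →L[ℝ] E × E) = D := ContinuousLinearMap.ext fun p => rfl
  refine ⟨⟨L, hL⟩, ?_⟩
  have hstrict' : HasStrictFDerivAt R (L : E × E →L[ℝ] E × E) (x, 0) := by
    rw [hL]; exact hstrict
  let ph := HasStrictFDerivAt.toOpenPartialHomeomorph R hstrict'
  refine ⟨ph.source, ph.open_source.mem_nhds (HasStrictFDerivAt.mem_toOpenPartialHomeomorph_source hstrict'), ?_⟩
  have hcoe : ⇑ph = R := HasStrictFDerivAt.toOpenPartialHomeomorph_coe hstrict'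
  have := ph.injOn
  rwa [hcoe] at this

/-- Any discretization map on ℝⁿ has invertible derivative along the zero section, and in
particular is a local diffeomorphism (locally injective) near every point of the zero section. -/
theorem discretization_map_local_diffeo (n : ℕ)
    (R : EuclideanSpace ℝ (Fin n) × EuclideanSpace ℝ (Fin n) →
         EuclideanSpace ℝ (Fin n) × EuclideanSpace ℝ (Fin n))
    (hR : ContDiff ℝ 1 R)
    (hR0 : ∀ x : EuclideanSpace ℝ (Fin n), R (x, 0) = (x, x))
    (hRd : ∀ x : EuclideanSpace ℝ (Fin n),
      fderiv ℝ (fun v : EuclideanSpace ℝ (Fin n) => (R (x, v)).2) 0 -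
        fderiv ℝ (fun v : EuclideanSpace ℝ (Fin n) => (R (x, v)).1) 0 =
      ContinuousLinearMap.id ℝ (EuclideanSpace ℝ (Fin n))) :
    ∀ x : EuclideanSpace ℝ (Fin n),
      (∃ L : (EuclideanSpace ℝ (Fin n) × EuclideanSpace ℝ (Fin n)) ≃L[ℝ]
              (EuclideanSpace ℝ (Fin n) × EuclideanSpace ℝ (Fin n)),
        (L : EuclideanSpace ℝ (Fin n) × EuclideanSpace ℝ (Fin n) →L[ℝ]
              EuclideanSpace ℝ (Fin n) × EuclideanSpace ℝ (Fin n)) =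
          fderiv ℝ R (x, 0)) ∧
      ∃ s ∈ nhds ((x, (0 : EuclideanSpace ℝ (Fin n)))), Set.InjOn R s :=
  fun x => discretization_aux R hR hR0 hRd x
end

section
/- For h > 0, the linear map G: ℝ⁴ⁿ → ℝ⁴ⁿ, G(q₀,p₀,q₁,p₁) = (q₀, p₁, (q₁−q₀)/h, (p₁−p₀)/h) (the inverse of the cotangent-lifted symplectic Euler-A discretization) satisfies d_Tω(Gu, Gw) = (1/h)·Ω₁₂(u,w) for all u,w ∈ ℝ⁴ⁿ. In particular G is a linear symplectomorphism from (ℝ⁴ⁿ, Ω₁₂) to (ℝ⁴ⁿ, h·d_Tω). -/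
open scoped RealInnerProductSpace

/-- The form d_Tω on ℝ⁴ⁿ, coordinates (q,p,q̇,ṗ). -/
noncomputable def dTomega (n : ℕ)
    (u w : EuclideanSpace ℝ (Fin n) × EuclideanSpace ℝ (Fin n) ×
           EuclideanSpace ℝ (Fin n) × EuclideanSpace ℝ (Fin n)) : ℝ :=
  ⟪u.1, w.2.2.2⟫ - ⟪w.1, u.2.2.2⟫ + ⟪u.2.2.1, w.2.1⟫ - ⟪w.2.2.1, u.2.1⟫

/-- Ω₁₂((u₀,v₀,u₁,v₁),(w₀,z₀,w₁,z₁)) = (⟨z₁,u₁⟩ − ⟨v₁,w₁⟩) − (⟨z₀,u₀⟩ − ⟨v₀,w₀⟩). -/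
noncomputable def Omega12 (n : ℕ)
    (u w : EuclideanSpace ℝ (Fin n) × EuclideanSpace ℝ (Fin n) ×
           EuclideanSpace ℝ (Fin n) × EuclideanSpace ℝ (Fin n)) : ℝ :=
  (⟪w.2.2.2, u.2.2.1⟫ - ⟪u.2.2.2, w.2.2.1⟫) - (⟪w.2.1, u.1⟫ - ⟪u.2.1, w.1⟫)

/-- G(q₀,p₀,q₁,p₁) = (q₀, p₁, (q₁−q₀)/h, (p₁−p₀)/h), the inverse of the cotangent-lifted
symplectic Euler-A discretization. -/
noncomputable def eulerAInv (n : ℕ) (h : ℝ)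
    (u : EuclideanSpace ℝ (Fin n) × EuclideanSpace ℝ (Fin n) ×
         EuclideanSpace ℝ (Fin n) × EuclideanSpace ℝ (Fin n)) :
    EuclideanSpace ℝ (Fin n) × EuclideanSpace ℝ (Fin n) ×
    EuclideanSpace ℝ (Fin n) × EuclideanSpace ℝ (Fin n) :=
  (u.1, u.2.2.2, h⁻¹ • (u.2.2.1 - u.1), h⁻¹ • (u.2.2.2 - u.2.1))

/-- d_Tω(Gu, Gw) = (1/h)·Ω₁₂(u,w); so G is a linear symplectomorphism from
(ℝ⁴ⁿ, Ω₁₂) to (ℝ⁴ⁿ, h·d_Tω). -/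
theorem eulerA_inverse_symplectic (n : ℕ) (h : ℝ) (hh : 0 < h) :
    ∀ u w, dTomega n (eulerAInv n h u) (eulerAInv n h w) = h⁻¹ * Omega12 n u w := by
  intro u w
  simp only [dTomega, eulerAInv, Omega12, inner_smul_left, inner_smul_right, inner_sub_left,
    inner_sub_right, real_inner_comm u.1 w.2.1, real_inner_comm u.2.2.1 w.2.2.2,
    conj_trivial, real_inner_comm w.2.2.1 u.2.2.2,
    real_inner_comm w.1 u.2.1]
  ring
end

section
/- Let M be a symmetric positive definite m×m matrix, V: ℝᵐ → ℝ, h > 0, and φ: ℝᵐ → ℝᵏ C¹. Suppose (q₀,p₀,q₁,p₁) and (q₁,p₁,q₂,p₂) both satisfy the symplectic Euler-B scheme: p_j = M(q_{j+1}−q_j)/h − hλ^{(j)}·Dφ(q_j)ᵀ, (p_{j+1}−p_j)/h = −∇V(q_{j+1}) + Dφ(q_j)ᵀλ^{(j)} + Dφ(q_{j+1})ᵀλ̃^{(j)}, φ(q_j) = 0 = φ(q_{j+1}), for j = 0,1 with multipliers λ^{(j)}, λ̃^{(j)} ∈ ℝᵏ. Then the positions satisfy the SHAKE two-step recursion: M(q₂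 − 2q₁ + q₀)/h² = −∇V(q₁) + Dφ(q₁)ᵀμ with μ = λ̃^{(0)} + λ^{(1)}, and φ(q₂) = 0. -/
open scoped RealInnerProductSpace

/-- Two consecutive steps of the cotangent-lifted symplectic Euler-B scheme for a
constrained mechanical Lagrangian reproduce the SHAKE two-step recursion. -/
theorem eulerB_composition_is_SHAKE (m k : ℕ) (h : ℝ) (hh : 0 < h)
    (M : EuclideanSpace ℝ (Fin m) ≃L[ℝ] EuclideanSpace ℝ (Fin m))
    (hMsym : ∀ x y : EuclideanSpace ℝ (Fin m), ⟪M x, y⟫ = ⟪x, M y⟫)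
    (hMpos : ∀ x : EuclideanSpace ℝ (Fin m), x ≠ 0 → 0 < ⟪M x, x⟫)
    (V : EuclideanSpace ℝ (Fin m) → ℝ)
    (φ : Fin k → EuclideanSpace ℝ (Fin m) → ℝ)
    (hφ : ∀ α, ContDiff ℝ 1 (φ α))
    (q₀ p₀ q₁ p₁ q₂ p₂ : EuclideanSpace ℝ (Fin m))
    (lam0 lamt0 lam1 lamt1 : Fin k → ℝ)
    -- step j = 0
    (e0a : p₀ = h⁻¹ • M (q₁ - q₀) - h • ∑ α, lam0 α • gradient (φ α) q₀)
    (e0b : h⁻¹ • (p₁ - p₀) = -gradient V q₁ +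
      (∑ α, lam0 α • gradient (φ α) q₀) + ∑ α, lamt0 α • gradient (φ α) q₁)
    (c0 : ∀ α, φ α q₀ = 0) (c1 : ∀ α, φ α q₁ = 0)
    -- step j = 1
    (e1a : p₁ = h⁻¹ • M (q₂ - q₁) - h • ∑ α, lam1 α • gradient (φ α) q₁)
    (e1b : h⁻¹ • (p₂ - p₁) = -gradient V q₂ +
      (∑ α, lam1 α • gradient (φ α) q₁) + ∑ α, lamt1 α • gradient (φ α) q₂)
    (c2 : ∀ α, φ α q₂ = 0) :
    ((h ^ 2)⁻¹ • M (q₂ - 2 • q₁ + q₀) =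
      -gradient V q₁ + ∑ α, (lamt0 α + lam1 α) • gradient (φ α) q₁) ∧
    (∀ α, φ α q₂ = 0) := by
  refine ⟨?_, c2⟩
  have hne : h ≠ 0 := hh.ne'
  set A := ∑ α, lam0 α • gradient (φ α) q₀ with hA
  set B := ∑ α, lamt0 α • gradient (φ α) q₁ with hB
  set C := ∑ α, lam1 α • gradient (φ α) q₁ with hC
  have hsum : ∑ α, (lamt0 α + lam1 α) • gradient (φ α) q₁ = B + C := by
    rw [hB, hC, ← Finset.sum_add_distrib]
    exact Finset.sum_congr rfl fun α _ => add_smul _ _ _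
  rw [hsum]
  have hMsplit : M (q₂ - 2 • q₁ + q₀) = M (q₂ - q₁) - M (q₁ - q₀) := by
    rw [← map_sub]; congr 1; abel
  rw [hMsplit]
  have key : (h ^ 2)⁻¹ • (M (q₂ - q₁) - M (q₁ - q₀)) - C + A
      = -gradient V q₁ + A + B := by
    rw [← e0b, e1a, e0a]
    match_scalars <;> field_simp <;> ring
  have := key
  linear_combination (norm := module) this
end
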